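/- arXiv:2508.17251 — 5 statements merged into one kernel-verified Lean document; each statement's English description precedes it below -/
import Mathlib

section
/- Suppose the data matrices X₂₋ ∈ ℝ^(n₂×T), X₂₊ ∈ ℝ^(n₂×T), U₂₋ ∈ ℝ^(m₂×T) satisfy X₂₊ = A₂X₂₋ + B₂U₂₋. If G ∈ ℝ^(T×n₁) satisfies X₂₊G = X₂₋GA₁ and U₂₋G = C₁, then Θ := X₂₋G solves the Sylvester equation A₂Θ − ΘA₁ = −B₂C₁. -/
theorem data_driven_sylvester_sufficiency
    (n₁ n₂ m₂ T : ℕ)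
    (A₁ : Matrix (Fin n₁) (Fin n₁) ℝ) (C₁ : Matrix (Fin m₂) (Fin n₁) ℝ)
    (A₂ : Matrix (Fin n₂) (Fin n₂) ℝ) (B₂ : Matrix (Fin n₂) (Fin m₂) ℝ)
    (X₂m X₂p : Matrix (Fin n₂) (Fin T) ℝ) (U₂m : Matrix (Fin m₂) (Fin T) ℝ)
    (hdata : X₂p = A₂ * X₂m + B₂ * U₂m)
    (G : Matrix (Fin T) (Fin n₁) ℝ)
    (hG1 : X₂p * G = X₂m * G * A₁)
    (hG2 : U₂m * G = C₁) :
    A₂ * (X₂m * G) - (X₂m * G) * A₁ = -(B₂ * C₁) := by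
  subst hdata
  rw [← hG1, ← hG2]; rw [Matrix.add_mul, Matrix.mul_assoc, Matrix.mul_assoc]
  abel
end

section
/- Suppose X₂₊ = A₂X₂₋ + B₂U₂₋, the stacked matrix [X₂₋; U₂₋] has full row rank n₂ + m₂, and λ(A₁) ∩ λ(A₂) = ∅. Then there exists G ∈ ℝ^(T×n₁) with X₂₊G = X₂₋GA₁ and U₂₋G = C₁, and the unique solution Θ of A₂Θ − ΘA₁ = −B₂C₁ equals X₂₋G for every such G. -/
open Polynomial Matrix

noncomputable def cSpectrum {n : ℕ} (A : Matrix (Fin n) (Fin n) ℝ) : Set ℂ :=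
  spectrum ℂ (A.map Complex.ofReal)

lemma mem_spectrum_iff_root {n : ℕ} (M : Matrix (Fin n) (Fin n) ℂ) (μ : ℂ) :
    μ ∈ spectrum ℂ M ↔ M.charpoly.eval μ = 0 := by
  rw [spectrum.mem_iff]
  have h : M.charpoly.eval μ = (algebraMap ℂ (Matrix (Fin n) (Fin n) ℂ) μ - M).det := by
    rw [Matrix.charpoly, _root_.eval_det, Matrix.matPolyEquiv_charmatrix]
    simp [Matrix.scalar, Matrix.algebraMap_eq_diagonal]
  rw [h]
  constructor
  · intro hu
    by_contra hdet
    exact hu ((Matrix.isUnit_iff_isUnit_det _).mpr (isUnit_iff_ne_zero.mpr hdet))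
  · intro hdet hu
    exact ((Matrix.isUnit_iff_isUnit_det _).mp hu).ne_zero hdet

lemma sylvester_homog {n₁ n₂ : ℕ}
    (A₁ : Matrix (Fin n₁) (Fin n₁) ℝ) (A₂ : Matrix (Fin n₂) (Fin n₂) ℝ)
    (hspec : cSpectrum A₁ ∩ cSpectrum A₂ = ∅)
    (Δ : Matrix (Fin n₂) (Fin n₁) ℝ) (h : A₂ * Δ = Δ * A₁) : Δ = 0 := by
  rcases Nat.eq_zero_or_pos n₁ with hn | hn₁
  · subst hn; ext i j; exact j.elim0
  set Ac₁ : Matrix (Fin n₁) (Fin n₁) ℂ := A₁.map Complex.ofReal with hAc₁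
  set Ac₂ : Matrix (Fin n₂) (Fin n₂) ℂ := A₂.map Complex.ofReal with hAc₂
  set Δc : Matrix (Fin n₂) (Fin n₁) ℂ := Δ.map Complex.ofReal with hΔc
  have hcomm : Ac₂ * Δc = Δc * Ac₁ := by
    have := congrArg (Matrix.map · (Complex.ofRealHom : ℝ →+* ℂ)) h
    rw [Matrix.map_mul, Matrix.map_mul] at this
    exact this
  have hpow : ∀ k : ℕ, Δc * Ac₁ ^ k = Ac₂ ^ k * Δc := by
    intro k
    induction k with
    | zero => simp
    | succ k ih =>
        rw [pow_succ, pow_succ, ← Matrix.mul_assoc, ih, Matrix.mul_assoc, ← hcomm,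
          ← Matrix.mul_assoc]
  set p : ℂ[X] := Ac₁.charpoly with hp
  have haev : ∀ q : ℂ[X], Δc * (aeval Ac₁ q) = (aeval Ac₂ q) * Δc := by
    intro q
    induction q using Polynomial.induction_on' with
    | add f g hf hg => simp [map_add, Matrix.mul_add, Matrix.add_mul, hf, hg]
    | monomial k a =>
        simp only [aeval_monomial, Algebra.algebraMap_eq_smul_one, smul_mul_assoc,
          Matrix.one_mul, Matrix.mul_smul, Matrix.smul_mul, hpow k]
  have h0 : (aeval Ac₂ p) * Δc = 0 := by
    have h1 := haev p
    rw [hp, Matrix.aeval_self_charpoly, Matrix.mul_zero] at h1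
    exact h1.symm
  have hdeg : 0 < p.degree := by
    rw [hp, Matrix.charpoly_degree_eq_dim, Fintype.card_fin]
    exact_mod_cast hn₁
  have hunit : IsUnit (aeval Ac₂ p) := by
    rw [← spectrum.zero_notMem_iff ℂ,
      spectrum.map_polynomial_aeval_of_degree_pos Ac₂ p hdeg]
    rintro ⟨μ, hμ₂, hev⟩
    have hμ₁ : μ ∈ cSpectrum A₁ := (mem_spectrum_iff_root Ac₁ μ).mpr hev
    have : μ ∈ cSpectrum A₁ ∩ cSpectrum A₂ := ⟨hμ₁, hμ₂⟩
    simp [hspec] at this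
  have hΔc0 : Δc = 0 := by
    obtain ⟨u, hu⟩ := hunit
    calc Δc = ((↑u⁻¹ : Matrix (Fin n₂) (Fin n₂) ℂ) * ↑u) * Δc := by rw [u.inv_mul, Matrix.one_mul]
      _ = (↑u⁻¹ : Matrix (Fin n₂) (Fin n₂) ℂ) * ((aeval Ac₂ p) * Δc) := by rw [Matrix.mul_assoc, hu]
      _ = 0 := by rw [h0, Matrix.mul_zero]
  ext i j
  have := congrFun (congrFun hΔc0 i) j
  simpa [hΔc, Matrix.map_apply] using this

theorem data_driven_sylvester_existence_and_characterisation
    (n₁ n₂ m₂ T : ℕ)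
    (A₁ : Matrix (Fin n₁) (Fin n₁) ℝ) (C₁ : Matrix (Fin m₂) (Fin n₁) ℝ)
    (A₂ : Matrix (Fin n₂) (Fin n₂) ℝ) (B₂ : Matrix (Fin n₂) (Fin m₂) ℝ)
    (X₂m X₂p : Matrix (Fin n₂) (Fin T) ℝ) (U₂m : Matrix (Fin m₂) (Fin T) ℝ)
    (hdata : X₂p = A₂ * X₂m + B₂ * U₂m)
    (hrank : (Matrix.fromRows X₂m U₂m).rank = n₂ + m₂)
    (hspec : cSpectrum A₁ ∩ cSpectrum A₂ = ∅) :
    (∃ G : Matrix (Fin T) (Fin n₁) ℝ, X₂p * G = X₂m * G * A₁ ∧ U₂m * G = C₁) ∧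
    (∃! Θ : Matrix (Fin n₂) (Fin n₁) ℝ, A₂ * Θ - Θ * A₁ = -(B₂ * C₁)) ∧
    (∀ G : Matrix (Fin T) (Fin n₁) ℝ, X₂p * G = X₂m * G * A₁ → U₂m * G = C₁ →
      ∀ Θ : Matrix (Fin n₂) (Fin n₁) ℝ,
        A₂ * Θ - Θ * A₁ = -(B₂ * C₁) → Θ = X₂m * G) := by
  -- The Sylvester operator as a linear map
  set L : Matrix (Fin n₂) (Fin n₁) ℝ →ₗ[ℝ] Matrix (Fin n₂) (Fin n₁) ℝ :=
    { toFun := fun Θ => A₂ * Θ - Θ * A₁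
      map_add' := fun Θ Θ' => by
        simp [Matrix.mul_add, Matrix.add_mul]; abel
      map_smul' := fun c Θ => by
        simp [Matrix.mul_smul, Matrix.smul_mul, smul_sub] } with hL
  have hLapply : ∀ Θ, L Θ = A₂ * Θ - Θ * A₁ := fun Θ => rfl
  have hLinj : Function.Injective L := by
    rw [← LinearMap.ker_eq_bot, LinearMap.ker_eq_bot']
    intro Δ hΔ
    rw [hLapply, sub_eq_zero] at hΔ
    exact sylvester_homog A₁ A₂ hspec Δ hΔ
  have hLsurj : Function.Surjective L := (LinearMap.injective_iff_surjective).mp hLinj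
  obtain ⟨Θ₀, hΘ₀⟩ := hLsurj (-(B₂ * C₁))
  rw [hLapply] at hΘ₀
  have huniq : ∀ Θ : Matrix (Fin n₂) (Fin n₁) ℝ,
      A₂ * Θ - Θ * A₁ = -(B₂ * C₁) → Θ = Θ₀ := by
    intro Θ hΘ
    exact hLinj (by rw [hLapply, hLapply, hΘ, hΘ₀])
  -- right inverse from full row rank
  have hsurjM : Function.Surjective (Matrix.fromRows X₂m U₂m).mulVecLin := by
    rw [← LinearMap.range_eq_top]
    apply Submodule.eq_top_of_finrank_eq
    rw [Matrix.rank] at hrank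
    rw [hrank, Module.finrank_fintype_fun_eq_card, Fintype.card_sum, Fintype.card_fin,
      Fintype.card_fin]
  set Y : Matrix (Fin n₂ ⊕ Fin m₂) (Fin n₁) ℝ := Matrix.fromRows Θ₀ C₁ with hY
  have hGex : ∃ G : Matrix (Fin T) (Fin n₁) ℝ, X₂m * G = Θ₀ ∧ U₂m * G = C₁ := by
    choose g hg using fun j => hsurjM (fun i => Y i j)
    refine ⟨fun t j => g j t, ?_, ?_⟩
    · ext i j
      have := congrFun (hg j) (Sum.inl i)
      show ∑ k, X₂m i k * g j k = Θ₀ i j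
      simpa [Matrix.mul_apply, Matrix.mulVecLin_apply, Matrix.mulVec, dotProduct,
        Matrix.fromRows_apply_inl, Matrix.fromRows_apply_inr, hY] using this
    · ext i j
      have := congrFun (hg j) (Sum.inr i)
      show ∑ k, U₂m i k * g j k = C₁ i j
      simpa [Matrix.mul_apply, Matrix.mulVecLin_apply, Matrix.mulVec, dotProduct,
        Matrix.fromRows_apply_inl, Matrix.fromRows_apply_inr, hY] using this
  obtain ⟨G₀, hG₀X, hG₀U⟩ := hGex
  have hG₀ : X₂p * G₀ = X₂m * G₀ * A₁ := by
    rw [hdata, Matrix.add_mul, Matrix.mul_assoc, Matrix.mul_assoc, hG₀X, hG₀U]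
    linear_combination (norm := abel) hΘ₀
  refine ⟨⟨G₀, hG₀, hG₀U⟩, ⟨Θ₀, hΘ₀, huniq⟩, ?_⟩
  intro G hG1 hG2 Θ hΘ
  have hsol : A₂ * (X₂m * G) - (X₂m * G) * A₁ = -(B₂ * C₁) := by
    have h1 : X₂p * G = A₂ * (X₂m * G) + B₂ * C₁ := by
      rw [hdata, Matrix.add_mul, Matrix.mul_assoc, Matrix.mul_assoc, hG2]
    rw [← hG1, h1]
    abel
  rw [huniq Θ hΘ, huniq (X₂m * G) hsol]
end

section
/- Let Θ be the exact solution of A₂Θ − ΘA₁ = −B₂C₁, and let Θ̂ = X̄₂₋Ĝ where Ĝ satisfies X̄₂₊Ĝ = X̄₂₋Ĝ Ā₁ and Ū₂₋Ĝ = C₁, with noisy data X̄₂₋ = X₂₋ + ΔX₂₋, X̄₂₊ = X₂₊ + ΔX₂₊, Ū₂₋ = U₂₋ + ΔU₂₋, Ā₁ = A₁ + ΔA₁, and true dynamics X₂₊ = A₂X₂₋ + B₂U₂₋ + D₂₋. Define R₂₋ := A₂ΔX₂₋ − ΔX₂₊ + B₂ΔU₂₋ − D₂₋. Then ΔΘ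 := Θ − Θ̂ satisfies the Sylvester equation A₂ΔΘ − ΔΘA₁ = −R₂₋Ĝ − X̄₂₋Ĝ ΔA₁. -/
theorem empirical_error_sylvester
    (n₁ n₂ m₂ T : ℕ)
    (A₁ ΔA₁ : Matrix (Fin n₁) (Fin n₁) ℝ) (C₁ : Matrix (Fin m₂) (Fin n₁) ℝ)
    (A₂ : Matrix (Fin n₂) (Fin n₂) ℝ) (B₂ : Matrix (Fin n₂) (Fin m₂) ℝ)
    (X₂m X₂p ΔX₂m ΔX₂p D₂m : Matrix (Fin n₂) (Fin T) ℝ)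
    (U₂m ΔU₂m : Matrix (Fin m₂) (Fin T) ℝ)
    (Θ : Matrix (Fin n₂) (Fin n₁) ℝ)
    (Ghat : Matrix (Fin T) (Fin n₁) ℝ)
    -- true (noisy) dynamics
    (hdata : X₂p = A₂ * X₂m + B₂ * U₂m + D₂m)
    -- exact Sylvester solution
    (hΘ : A₂ * Θ - Θ * A₁ = -(B₂ * C₁))
    -- Ghat computed from noisy data
    (hG1 : (X₂p + ΔX₂p) * Ghat = (X₂m + ΔX₂m) * Ghat * (A₁ + ΔA₁))
    (hG2 : (U₂m + ΔU₂m) * Ghat = C₁) :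
    A₂ * (Θ - (X₂m + ΔX₂m) * Ghat) - (Θ - (X₂m + ΔX₂m) * Ghat) * A₁ =
      -((A₂ * ΔX₂m - ΔX₂p + B₂ * ΔU₂m - D₂m) * Ghat) -
        (X₂m + ΔX₂m) * Ghat * ΔA₁ := by
  subst hdata
  have h2 : U₂m * Ghat = C₁ - ΔU₂m * Ghat := by
    rw [eq_sub_iff_add_eq, ← Matrix.add_mul, hG2]
  have h1 : (X₂m + ΔX₂m) * Ghat * A₁ =
      (A₂ * X₂m + B₂ * U₂m + D₂m + ΔX₂p) * Ghat - (X₂m + ΔX₂m) * Ghat * ΔA₁ := by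
    rw [eq_sub_iff_add_eq, ← Matrix.mul_add, ← hG1]
  rw [Matrix.mul_sub, Matrix.sub_mul, h1]
  rw [Matrix.add_mul (A₂ * X₂m + B₂ * U₂m + D₂m), Matrix.add_mul (A₂ * X₂m + B₂ * U₂m),
      Matrix.add_mul (A₂ * X₂m), Matrix.mul_assoc B₂ U₂m Ghat, h2]
  rw [sub_eq_iff_eq_add] at hΘ
  rw [hΘ]
  simp only [Matrix.mul_add, Matrix.add_mul, Matrix.mul_sub, Matrix.sub_mul, Matrix.mul_assoc]
  abel
end

section
/- Suppose the data satisfy X₊ = AX₋ + BU₋ + EΩ₋ and E₋ = CX₋ + DU₋ + FΩ₋ (error data), and [X₋; U₋; Ω₋] has full row rank n+m+ν. If G ∈ ℝ^(T×ν) satisfies X₊G = X₋GS, E₋G = 0, and Ω₋G = I, then Π := X₋G and Γ := U₋G solve the regulator equations ΠS = AΠ + BΓ + E and 0 = CΠ + DΓ + F. Conversely, any solution (Π, Γ) of the regulator equations arises this way. -/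
theorem data_driven_regulator_equations
    (n m p ν T : ℕ)
    (A : Matrix (Fin n) (Fin n) ℝ) (B : Matrix (Fin n) (Fin m) ℝ)
    (C : Matrix (Fin p) (Fin n) ℝ) (D : Matrix (Fin p) (Fin m) ℝ)
    (E : Matrix (Fin n) (Fin ν) ℝ) (F : Matrix (Fin p) (Fin ν) ℝ)
    (S : Matrix (Fin ν) (Fin ν) ℝ)
    (Xm Xp : Matrix (Fin n) (Fin T) ℝ) (Um : Matrix (Fin m) (Fin T) ℝ)
    (Ωm : Matrix (Fin ν) (Fin T) ℝ) (Em : Matrix (Fin p) (Fin T) ℝ)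
    (hdataX : Xp = A * Xm + B * Um + E * Ωm)
    (hdataE : Em = C * Xm + D * Um + F * Ωm)
    (hrank : (Matrix.fromRows Xm (Matrix.fromRows Um Ωm)).rank = n + m + ν) :
    (∀ G : Matrix (Fin T) (Fin ν) ℝ,
      Xp * G = Xm * G * S → Em * G = 0 → Ωm * G = 1 →
        (Xm * G) * S = A * (Xm * G) + B * (Um * G) + E ∧
        (0 : Matrix (Fin p) (Fin ν) ℝ) = C * (Xm * G) + D * (Um * G) + F) ∧
    (∀ (Pim : Matrix (Fin n) (Fin ν) ℝ) (Γ : Matrix (Fin m) (Fin ν) ℝ),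
      Pim * S = A * Pim + B * Γ + E →
      (0 : Matrix (Fin p) (Fin ν) ℝ) = C * Pim + D * Γ + F →
        ∃ G : Matrix (Fin T) (Fin ν) ℝ,
          Xp * G = Xm * G * S ∧ Em * G = 0 ∧ Ωm * G = 1 ∧
          Pim = Xm * G ∧ Γ = Um * G) := by
  constructor
  · intro G h1 h2 h3
    constructor
    · rw [← Matrix.mul_assoc, ← h1, hdataX]
      simp [Matrix.add_mul, Matrix.mul_assoc, h3]
    · rw [← h2, hdataE]
      simp [Matrix.add_mul, Matrix.mul_assoc, h3]
  · intro Pim Γ hreg1 hreg2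
    set W : Matrix (Fin n ⊕ (Fin m ⊕ Fin ν)) (Fin T) ℝ :=
      Matrix.fromRows Xm (Matrix.fromRows Um Ωm) with hW
    -- surjectivity of mulVec
    have hcard : Fintype.card (Fin n ⊕ (Fin m ⊕ Fin ν)) = n + m + ν := by
      simp [Nat.add_assoc]
    have htop : LinearMap.range W.mulVecLin = ⊤ := by
      apply Submodule.eq_top_of_finrank_eq
      rw [← Matrix.rank, hrank, Module.finrank_pi, hcard]
    have hsurj : Function.Surjective W.mulVecLin := by
      rw [← LinearMap.range_eq_top]; exact htop
    choose g hg using hsurj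
    set G₀ : Matrix (Fin T) (Fin n ⊕ (Fin m ⊕ Fin ν)) ℝ :=
      fun k j => g (fun i => (1 : Matrix (Fin n ⊕ (Fin m ⊕ Fin ν)) (Fin n ⊕ (Fin m ⊕ Fin ν)) ℝ) i j) k with hG₀
    have hWG₀ : W * G₀ = 1 := by
      ext i j
      have := congrFun (hg (fun i => (1 : Matrix (Fin n ⊕ (Fin m ⊕ Fin ν)) (Fin n ⊕ (Fin m ⊕ Fin ν)) ℝ) i j)) i
      rw [Matrix.mul_apply]
      simpa [Matrix.mul_apply, Matrix.mulVecLin, Matrix.mulVec, dotProduct, hG₀] using this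
    set M : Matrix (Fin n ⊕ (Fin m ⊕ Fin ν)) (Fin ν) ℝ :=
      Matrix.fromRows Pim (Matrix.fromRows Γ 1) with hM
    refine ⟨G₀ * M, ?_⟩
    have hWG : W * (G₀ * M) = M := by
      rw [← Matrix.mul_assoc, hWG₀, Matrix.one_mul]
    rw [hW, Matrix.fromRows_mul, Matrix.fromRows_mul, hM,
      Matrix.fromRows_inj.eq_iff, Matrix.fromRows_inj.eq_iff] at hWG
    obtain ⟨hX, hU, hΩ⟩ := hWG
    rw [← hM] at hX hU hΩ
    refine ⟨?_, ?_, hΩ, hX.symm, hU.symm⟩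
    · rw [hdataX]
      simp [Matrix.add_mul, Matrix.mul_assoc, hX, hU, hΩ, ← hreg1]
    · rw [hdataE]
      simp [Matrix.add_mul, Matrix.mul_assoc, hX, hU, hΩ, ← hreg2]
end

section
/- Suppose X₁₋ ∈ ℝ^(n₁×T) has full row rank n₁, X₁₊ = A₁X₁₋, Y₁₋ = C₁X₁₋, and X₂₊ = A₂X₂₋ + B₂U₂₋ with [X₂₋; U₂₋] of full row rank and λ(A₁) ∩ λ(A₂) = ∅. Then G ∈ ℝ^(T×n₁) satisfies X₂₊G X₁₋ = X₂₋G X₁₊ and U₂₋G X₁₋ = Y₁₋ if and only if G satisfies X₂₊G = X₂₋GA₁ and U₂₋G = C₁; in either case Θ := X₂₋G is the unique solution of A₂Θ − ΘA₁ = −B₂C₁. -/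
open Polynomial Matrix

/-- A square matrix of full rank is a unit. -/
lemma isUnit_of_rank_eq {n : ℕ} (S : Matrix (Fin n) (Fin n) ℝ) (h : S.rank = n) :
    IsUnit S := by
  rw [Matrix.isUnit_iff_isUnit_det, isUnit_iff_ne_zero]
  intro hdet
  obtain ⟨v, hv, hv0⟩ := (Matrix.exists_mulVec_eq_zero_iff).mpr hdet
  have hsurj : Function.Surjective S.mulVecLin := by
    rw [← LinearMap.range_eq_top]
    apply Submodule.eq_top_of_finrank_eq
    rw [← Matrix.rank, h, Module.finrank_fintype_fun_eq_card, Fintype.card_fin]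
  have hinj : Function.Injective S.mulVecLin :=
    (LinearMap.injective_iff_surjective).mpr hsurj
  exact hv (hinj (by simpa [Matrix.mulVecLin_apply] using hv0))

/-- Right-cancellation by a full-row-rank matrix. -/
lemma cancel_right {n T k : ℕ} (X : Matrix (Fin n) (Fin T) ℝ) (h : X.rank = n)
    (M N : Matrix (Fin k) (Fin n) ℝ) (hMN : M * X = N * X) : M = N := by
  have hS : IsUnit (X * Xᵀ) := isUnit_of_rank_eq _ (by rw [Matrix.rank_self_mul_transpose, h])
  obtain ⟨u, hu⟩ := hS
  have h2 : M * (X * Xᵀ) = N * (X * Xᵀ) := by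
    rw [← Matrix.mul_assoc, ← Matrix.mul_assoc, hMN]
  calc M = M * (X * Xᵀ) * (↑u⁻¹ : Matrix (Fin n) (Fin n) ℝ) := by rw [← hu, Matrix.mul_assoc, u.mul_inv, Matrix.mul_one]
    _ = N * (X * Xᵀ) * (↑u⁻¹ : Matrix (Fin n) (Fin n) ℝ) := by rw [h2]
    _ = N := by rw [← hu, Matrix.mul_assoc, u.mul_inv, Matrix.mul_one]

lemma charpoly_eval_eq {n : ℕ} (M : Matrix (Fin n) (Fin n) ℂ) (r : ℂ) :
    M.charpoly.eval r = (r • (1 : Matrix (Fin n) (Fin n) ℂ) - M).det := by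
  rw [Matrix.charpoly, eval_det, matPolyEquiv_charmatrix]
  congr 1
  simp [Matrix.scalar, Matrix.smul_one_eq_diagonal]

lemma mem_spectrum_iff_isRoot {n : ℕ} (M : Matrix (Fin n) (Fin n) ℂ) (r : ℂ) :
    r ∈ spectrum ℂ M ↔ M.charpoly.IsRoot r := by
  rw [spectrum.mem_iff, Polynomial.IsRoot, charpoly_eval_eq]
  rw [Algebra.algebraMap_eq_smul_one]
  rw [Matrix.isUnit_iff_isUnit_det, isUnit_iff_ne_zero, not_not]

lemma aeval_mul_of_comm {a b : ℕ} (A : Matrix (Fin a) (Fin a) ℂ)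
    (B : Matrix (Fin b) (Fin b) ℂ) (D : Matrix (Fin b) (Fin a) ℂ)
    (h : B * D = D * A) (p : ℂ[X]) :
    (aeval B p) * D = D * (aeval A p) := by
  induction p using Polynomial.induction_on' with
  | add p q hp hq =>
    rw [map_add, map_add, Matrix.add_mul, Matrix.mul_add, hp, hq]
  | monomial k c =>
    have hk : ∀ k : ℕ, B ^ k * D = D * A ^ k := by
      intro k
      induction k with
      | zero => simp
      | succ k ih =>
        rw [pow_succ, pow_succ, Matrix.mul_assoc, h, ← Matrix.mul_assoc, ih,
          Matrix.mul_assoc]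
    simp only [aeval_monomial, Matrix.mul_assoc]
    rw [hk]
    simp [Algebra.algebraMap_eq_smul_one, Matrix.smul_mul, Matrix.mul_smul]

/-- Sylvester uniqueness over ℂ. -/
lemma sylvester_homog_s18 {a b : ℕ} (A : Matrix (Fin a) (Fin a) ℂ)
    (B : Matrix (Fin b) (Fin b) ℂ) (D : Matrix (Fin b) (Fin a) ℂ)
    (hdisj : spectrum ℂ A ∩ spectrum ℂ B = ∅)
    (h : B * D = D * A) : D = 0 := by
  set p := A.charpoly with hp
  have hzero : (aeval B p) * D = 0 := by
    rw [aeval_mul_of_comm A B D h p, Matrix.aeval_self_charpoly, Matrix.mul_zero]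
  have hdet : (aeval B p).det ≠ 0 := by
    have hsplits : p.Splits := IsAlgClosed.splits p
    have hmonic : p.Monic := Matrix.charpoly_monic A
    have hfact := hsplits.eq_prod_roots_of_monic hmonic
    set f : ℂ[X] →* ℂ :=
      Matrix.detMonoidHom.comp ((aeval B : ℂ[X] →ₐ[ℂ] Matrix (Fin b) (Fin b) ℂ) :
        ℂ[X] →* Matrix (Fin b) (Fin b) ℂ) with hf
    have : (aeval B p).det = f p := rfl
    rw [this, hfact, map_multiset_prod, Multiset.map_map]
    apply Multiset.prod_ne_zero
    intro h0
    rw [Multiset.mem_map] at h0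
    obtain ⟨r, hr, hfr⟩ := h0
    simp only [Function.comp_apply] at hfr
    have hrA : r ∈ spectrum ℂ A := by
      rw [mem_spectrum_iff_isRoot]
      exact Polynomial.isRoot_of_mem_roots hr
    have hrB : r ∉ spectrum ℂ B := by
      intro hB
      have hmem : r ∈ spectrum ℂ A ∩ spectrum ℂ B := ⟨hrA, hB⟩
      rw [hdisj] at hmem
      exact hmem
    rw [spectrum.mem_iff, not_not, Algebra.algebraMap_eq_smul_one,
      Matrix.isUnit_iff_isUnit_det, isUnit_iff_ne_zero] at hrB
    have hfx : f (X - C r) = (B - r • 1).det := by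
      simp [hf, Matrix.detMonoidHom, map_sub, aeval_X, aeval_C,
        Algebra.algebraMap_eq_smul_one]
    have hne : f (X - C r) ≠ 0 := by
      rw [hfx, show B - r • (1 : Matrix (Fin b) (Fin b) ℂ) = -(r • 1 - B) from (neg_sub _ _).symm,
        Matrix.det_neg]
      exact mul_ne_zero (pow_ne_zero _ (neg_ne_zero.mpr one_ne_zero)) hrB
    exact hne hfr
  have hu : IsUnit (aeval B p) := (Matrix.isUnit_iff_isUnit_det _).mpr
    (isUnit_iff_ne_zero.mpr hdet)
  obtain ⟨u, hu⟩ := hu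
  calc D = ((↑u⁻¹ : Matrix (Fin b) (Fin b) ℂ) * ↑u) * D := by rw [u.inv_mul, Matrix.one_mul]
    _ = (↑u⁻¹ : Matrix (Fin b) (Fin b) ℂ) * ((aeval B p) * D) := by rw [hu, Matrix.mul_assoc]
    _ = 0 := by rw [hzero, Matrix.mul_zero]

theorem extended_configuration_sylvester
    (n₁ n₂ m₂ T : ℕ)
    (A₁ : Matrix (Fin n₁) (Fin n₁) ℝ) (C₁ : Matrix (Fin m₂) (Fin n₁) ℝ)
    (A₂ : Matrix (Fin n₂) (Fin n₂) ℝ) (B₂ : Matrix (Fin n₂) (Fin m₂) ℝ)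
    (X₁m X₁p : Matrix (Fin n₁) (Fin T) ℝ) (Y₁m : Matrix (Fin m₂) (Fin T) ℝ)
    (X₂m X₂p : Matrix (Fin n₂) (Fin T) ℝ) (U₂m : Matrix (Fin m₂) (Fin T) ℝ)
    (hrank1 : X₁m.rank = n₁)
    (hX₁p : X₁p = A₁ * X₁m)
    (hY₁m : Y₁m = C₁ * X₁m)
    (hdata2 : X₂p = A₂ * X₂m + B₂ * U₂m)
    (hrank2 : (Matrix.fromRows X₂m U₂m).rank = n₂ + m₂)
    (hspec : cSpectrum A₁ ∩ cSpectrum A₂ = ∅) :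
    ∀ G : Matrix (Fin T) (Fin n₁) ℝ,
      ((X₂p * G * X₁m = X₂m * G * X₁p ∧ U₂m * G * X₁m = Y₁m) ↔
        (X₂p * G = X₂m * G * A₁ ∧ U₂m * G = C₁)) ∧
      (X₂p * G = X₂m * G * A₁ → U₂m * G = C₁ →
        A₂ * (X₂m * G) - (X₂m * G) * A₁ = -(B₂ * C₁) ∧
        ∀ Θ : Matrix (Fin n₂) (Fin n₁) ℝ,
          A₂ * Θ - Θ * A₁ = -(B₂ * C₁) → Θ = X₂m * G) := by
  intro G
  constructor
  · constructor
    · rintro ⟨h1, h2⟩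
      constructor
      · apply cancel_right X₁m hrank1
        rw [h1, hX₁p]
        simp [Matrix.mul_assoc]
      · apply cancel_right X₁m hrank1
        rw [h2, hY₁m]
    · rintro ⟨h1, h2⟩
      constructor
      · rw [h1, hX₁p, Matrix.mul_assoc]
      · rw [h2, hY₁m]
  · intro h1 h2
    have hSyl : A₂ * (X₂m * G) - (X₂m * G) * A₁ = -(B₂ * C₁) := by
      have : (A₂ * X₂m + B₂ * U₂m) * G = X₂m * G * A₁ := by rw [← hdata2, h1]
      rw [Matrix.add_mul, Matrix.mul_assoc, Matrix.mul_assoc, h2] at this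
      rw [← Matrix.mul_assoc] at this ⊢
      linear_combination (norm := noncomm_ring) this
    refine ⟨hSyl, ?_⟩
    intro Θ hΘ
    have hD : A₂ * (Θ - X₂m * G) = (Θ - X₂m * G) * A₁ := by
      have := hΘ.trans hSyl.symm
      rw [Matrix.mul_sub, Matrix.sub_mul]
      linear_combination (norm := noncomm_ring) this
    -- pass to ℂ
    have key : (Θ - X₂m * G).map Complex.ofReal = 0 := by
      apply sylvester_homog_s18 (A₁.map Complex.ofReal) (A₂.map Complex.ofReal)
        _ hspec
      have := congrArg (fun M : Matrix (Fin n₂) (Fin n₁) ℝ =>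
        M.map (Complex.ofRealHom : ℝ →+* ℂ)) hD
      simp only [Matrix.map_mul] at this
      exact this
    have : Θ - X₂m * G = 0 := by
      ext i j
      have h := congrFun (congrFun key i) j
      simp only [Matrix.map_apply, Matrix.zero_apply] at h
      exact_mod_cast h
    exact sub_eq_zero.mp this
end
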